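/- Let c > 0 and y ∈ (max(0, 1−c), 1), and let α > 0 be the unique solution of (1 − e^{−α})/α = (1−y)/c. Define δ* ∈ 𝒫(ℕ) by δ*(0) = y and δ*(k) = (1−y)·α^k/(k!·(e^α − 1)) for k ≥ 1. Then δ* is a probability measure on ℕ with δ*(0) = y and mean Σ_{k≥0} k·δ*(k) = c, and δ* minimizes the relative entropy with respect to the Poisson distribution q_c among all measures satisfying these constraints: for every probability measure δ on ℕ with δ(0) = y and Σ_{k≥0} k·δ(k) = c, one has H(δ ∥ q_c) ≥ H(δ* ∥ q_c). -/

import Mathlib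

open scoped ENNReal

/-- Relative entropy `H(p ∥ q) = ∑ₖ p(k) log (p(k)/q(k))` of two probability mass functions
on `ℕ`, with the conventions `0 log 0 = 0` and `H(p ∥ q) = ∞` if `p` is not absolutely
continuous w.r.t. `q`.  (For mass functions of probability measures this agrees with the
usual definition: each corrected summand `p log(p/q) − p + q` is nonnegative and the
correction terms `∑ q − ∑ p` cancel.) -/
noncomputable def relEntN (p q : ℕ → ℝ≥0∞) : ℝ≥0∞ := by
  classical
  exact if ∀ k, q k = 0 → p k = 0 then
    (∑' k, ENNReal.ofReal
      ((p k).toReal * Real.log ((p k).toReal / (q k).toReal) - (p k).toReal + (q k).toReal))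
  else ⊤

/-- The Poisson mass function with parameter `c`: `q_c(k) = e^{−c} c^k / k!`. -/
noncomputable def poisMass (c : ℝ) : ℕ → ℝ≥0∞ :=
  fun k => ENNReal.ofReal (Real.exp (-c) * c ^ k / (Nat.factorial k))

/-- The minimizer `δ*`: `δ*(0) = y` and `δ*(k) = (1−y)·α^k/(k!(e^α − 1))` for `k ≥ 1`. -/
noncomputable def deltaStar (y α : ℝ) : ℕ → ℝ≥0∞ :=
  fun k => if k = 0 then ENNReal.ofReal y
    else ENNReal.ofReal ((1 - y) * α ^ k / (Nat.factorial k * (Real.exp α - 1)))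


lemma real_exp_tsum (x : ℝ) : Real.exp x = ∑' n : ℕ, x ^ n / n.factorial := by
  rw [Real.exp_eq_exp_ℝ, NormedSpace.exp_eq_tsum_div]

lemma key_ineq (x y : ℝ) (hx : 0 ≤ x) (hy : 0 < y) :
    0 ≤ x * Real.log (x / y) - x + y := by
  rcases eq_or_lt_of_le hx with h | h
  · simp [← h, hy.le]
  · have hlog : Real.log (y / x) ≤ y / x - 1 := Real.log_le_sub_one_of_pos (by positivity)
    have hxy : Real.log (y / x) = - Real.log (x / y) := by
      rw [← Real.log_inv]; congr 1; field_simp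
    have h2 : x * Real.log (y / x) ≤ y - x :=
      calc x * Real.log (y / x) ≤ x * (y / x - 1) := mul_le_mul_of_nonneg_left hlog h.le
        _ = y - x := by field_simp
    rw [hxy] at h2; linarith

noncomputable def dsR (y α : ℝ) : ℕ → ℝ := fun k =>
  if k = 0 then y else (1 - y) * α ^ k / (Nat.factorial k * (Real.exp α - 1))

lemma expm1_pos {α : ℝ} (hα : 0 < α) : 0 < Real.exp α - 1 := by
  have := Real.add_one_lt_exp (ne_of_gt hα)
  linarith

lemma dsR_succ (y α : ℝ) (hα : 0 < α) (k : ℕ) :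
    dsR y α (k+1) = ((1-y)/(Real.exp α - 1)) * (α^(k+1)/(k+1).factorial) := by
  have hE := expm1_pos hα
  have h1 : ((k+1).factorial : ℝ) ≠ 0 := Nat.cast_ne_zero.mpr (k+1).factorial_ne_zero
  simp only [dsR, Nat.succ_ne_zero, if_false]
  rw [div_mul_div_comm, mul_comm (Real.exp α - 1)]

lemma dsR_pos (y α : ℝ) (hy : 0 < y) (hy1 : y < 1) (hα : 0 < α) (k : ℕ) :
    0 < dsR y α k := by
  have hE := expm1_pos hα
  cases k with
  | zero => simpa [dsR] using hy
  | succ n =>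
    simp only [dsR, Nat.succ_ne_zero, if_false]
    have hf : (0:ℝ) < (n+1).factorial := by positivity
    exact div_pos (mul_pos (by linarith) (pow_pos hα _)) (mul_pos hf hE)

lemma hcross (c y α : ℝ) (hc : 0 < c) (hα : 0 < α)
    (hsol : (1 - Real.exp (-α)) / α = (1 - y) / c) :
    (1 - y) * α = c * (1 - Real.exp (-α)) := by
  rw [div_eq_div_iff hα.ne' hc.ne'] at hsol
  linarith

lemma hmean_const (c y α : ℝ) (hc : 0 < c) (hα : 0 < α)
    (hsol : (1 - Real.exp (-α)) / α = (1 - y) / c) :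
    ((1-y)/(Real.exp α - 1)) * (α * Real.exp α) = c := by
  have hE := expm1_pos hα
  have h0 : Real.exp α ≠ 0 := (Real.exp_pos α).ne'
  have hcα := hcross c y α hc hα hsol
  rw [Real.exp_neg] at hcα
  field_simp at hcα ⊢
  nlinarith [hcα]

lemma summable_shift (x : ℝ) : Summable (fun k : ℕ => x ^ (k+1) / (k+1).factorial) :=
  (summable_nat_add_iff 1).mpr (Real.summable_pow_div_factorial x)

lemma sum_shift (x : ℝ) : ∑' k : ℕ, x ^ (k+1) / (k+1).factorial = Real.exp x - 1 := by
  have h := real_exp_tsum x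
  rw [Summable.tsum_eq_zero_add (Real.summable_pow_div_factorial x)] at h
  simp at h
  linarith

lemma shift'_eq (x : ℝ) (k : ℕ) :
    (k+1 : ℝ) * (x ^ (k+1) / (k+1).factorial) = x * (x ^ k / k.factorial) := by
  rw [Nat.factorial_succ, pow_succ]
  push_cast
  have h1 : (k.factorial : ℝ) ≠ 0 := Nat.cast_ne_zero.mpr k.factorial_ne_zero
  field_simp

lemma sum_shift' (x : ℝ) :
    ∑' k : ℕ, (k+1 : ℝ) * (x ^ (k+1) / (k+1).factorial) = x * Real.exp x := by
  rw [tsum_congr (shift'_eq x), tsum_mul_left, ← real_exp_tsum]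

lemma summable_shift' (x : ℝ) :
    Summable (fun k : ℕ => (k+1 : ℝ) * (x ^ (k+1) / (k+1).factorial)) :=
  (summable_congr (shift'_eq x)).mpr ((Real.summable_pow_div_factorial x).mul_left x)

lemma summable_dsR (y α : ℝ) (hα : 0 < α) : Summable (dsR y α) := by
  apply (summable_nat_add_iff 1).mp
  have : (fun k : ℕ => dsR y α (k+1)) =
      fun k => ((1-y)/(Real.exp α - 1)) * (α^(k+1)/(k+1).factorial) := by
    funext k; exact dsR_succ y α hα k
  rw [this]
  exact (summable_shift α).mul_left _

lemma tsum_dsR (y α : ℝ) (hα : 0 < α) : ∑' k, dsR y α k = 1 := by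
  have hE := expm1_pos hα
  rw [Summable.tsum_eq_zero_add (summable_dsR y α hα)]
  have h0 : dsR y α 0 = y := by simp [dsR]
  rw [h0, tsum_congr (dsR_succ y α hα), tsum_mul_left, sum_shift,
    div_mul_cancel₀ _ hE.ne']
  ring

lemma summable_mean_dsR (y α : ℝ) (hα : 0 < α) :
    Summable (fun k : ℕ => (k : ℝ) * dsR y α k) := by
  apply (summable_nat_add_iff 1).mp
  have : (fun k : ℕ => ((k+1 : ℕ) : ℝ) * dsR y α (k+1)) =
      fun k : ℕ => ((1-y)/(Real.exp α - 1)) * ((k+1:ℝ) * (α^(k+1)/(Nat.factorial (k+1)))) := by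
    funext k; rw [dsR_succ y α hα k]; push_cast; ring
  rw [this]
  exact (summable_shift' α).mul_left _

lemma tsum_mean_dsR (c y α : ℝ) (hc : 0 < c) (hα : 0 < α)
    (hsol : (1 - Real.exp (-α)) / α = (1 - y) / c) :
    ∑' k : ℕ, (k : ℝ) * dsR y α k = c := by
  rw [Summable.tsum_eq_zero_add (summable_mean_dsR y α hα)]
  have h : (fun k : ℕ => ((k+1 : ℕ) : ℝ) * dsR y α (k+1)) =
      fun k : ℕ => ((1-y)/(Real.exp α - 1)) * ((k+1:ℝ) * (α^(k+1)/(Nat.factorial (k+1)))) := by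
    funext k; rw [dsR_succ y α hα k]; push_cast; ring
  rw [show ((0:ℕ):ℝ) * dsR y α 0 = 0 by simp, zero_add, h, tsum_mul_left, sum_shift']
  exact hmean_const c y α hc hα hsol


noncomputable def qR (c : ℝ) : ℕ → ℝ := fun k => Real.exp (-c) * c ^ k / (Nat.factorial k)

lemma qR_pos (c : ℝ) (hc : 0 < c) (k : ℕ) : 0 < qR c k :=
  div_pos (mul_pos (Real.exp_pos _) (pow_pos hc _)) (by exact_mod_cast k.factorial_pos)

lemma qR_eq (c : ℝ) (k : ℕ) : qR c k = Real.exp (-c) * (c ^ k / (Nat.factorial k)) := by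
  rw [qR, mul_div_assoc]

lemma summable_qR (c : ℝ) : Summable (qR c) := by
  refine (summable_congr (qR_eq c)).mpr ?_
  exact (Real.summable_pow_div_factorial c).mul_left _

lemma tsum_qR (c : ℝ) : ∑' k, qR c k = 1 := by
  rw [tsum_congr (qR_eq c), tsum_mul_left, ← real_exp_tsum, ← Real.exp_add]
  simp

lemma poisMass_eq (c : ℝ) (k : ℕ) : poisMass c k = ENNReal.ofReal (qR c k) := rfl

lemma poisMass_ne_zero (c : ℝ) (hc : 0 < c) (k : ℕ) : poisMass c k ≠ 0 := by
  rw [poisMass_eq]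
  exact (ENNReal.ofReal_pos.mpr (qR_pos c hc k)).ne'

lemma deltaStar_eq (y α : ℝ) (k : ℕ) : deltaStar y α k = ENNReal.ofReal (dsR y α k) := by
  simp only [deltaStar, dsR]
  split <;> rfl

lemma part1 (y α : ℝ) (hy : 0 < y) (hy1 : y < 1) (hα : 0 < α) :
    (∑' k, deltaStar y α k) = 1 := by
  rw [tsum_congr (deltaStar_eq y α),
    ← ENNReal.ofReal_tsum_of_nonneg (fun k => (dsR_pos y α hy hy1 hα k).le) (summable_dsR y α hα),
    tsum_dsR y α hα, ENNReal.ofReal_one]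

lemma part3 (c y α : ℝ) (hc : 0 < c) (hy : 0 < y) (hy1 : y < 1) (hα : 0 < α)
    (hsol : (1 - Real.exp (-α)) / α = (1 - y) / c) :
    (∑' k : ℕ, (k : ℝ≥0∞) * deltaStar y α k) = ENNReal.ofReal c := by
  have h : ∀ k : ℕ, (k : ℝ≥0∞) * deltaStar y α k = ENNReal.ofReal ((k : ℝ) * dsR y α k) := by
    intro k
    rw [deltaStar_eq, ← ENNReal.ofReal_natCast, ← ENNReal.ofReal_mul (Nat.cast_nonneg k)]
  rw [tsum_congr h, ← ENNReal.ofReal_tsum_of_nonneg _ (summable_mean_dsR y α hα),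
    tsum_mean_dsR c y α hc hα hsol]
  exact fun k => mul_nonneg (Nat.cast_nonneg k) (dsR_pos y α hy hy1 hα k).le

/-- The affine (in `k`) representation of `log (δ*(k)/q_c(k))`. -/
noncomputable def Lf (c y α : ℝ) : ℕ → ℝ := fun k =>
  (Real.log ((1 - y) / (Real.exp α - 1)) + c) + (k : ℝ) * Real.log (α / c)
    + (if k = 0 then Real.log y - Real.log ((1 - y) / (Real.exp α - 1)) else 0)

lemma Lf_eq (c y α : ℝ) (hc : 0 < c) (hy : 0 < y) (hy1 : y < 1) (hα : 0 < α) (k : ℕ) :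
    Real.log (dsR y α k / qR c k) = Lf c y α k := by
  have hE := expm1_pos hα
  have hC : (0:ℝ) < (1 - y) / (Real.exp α - 1) := div_pos (by linarith) hE
  cases k with
  | zero =>
    have hq0 : qR c 0 = Real.exp (-c) := by simp [qR]
    have hd0 : dsR y α 0 = y := by simp [dsR]
    rw [hd0, hq0, Real.log_div hy.ne' (Real.exp_pos _).ne', Real.log_exp, Lf]
    simp
    ring
  | succ n =>
    have hfac : ((n+1).factorial : ℝ) ≠ 0 := Nat.cast_ne_zero.mpr (n+1).factorial_ne_zero
    have hratio : dsR y α (n+1) / qR c (n+1)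
        = ((1 - y) / (Real.exp α - 1)) * (α / c) ^ (n+1) * Real.exp c := by
      rw [dsR_succ y α hα, qR, Real.exp_neg, div_pow]
      have hcn : c ^ (n+1) ≠ 0 := pow_ne_zero _ hc.ne'
      have he : Real.exp c ≠ 0 := (Real.exp_pos c).ne'
      field_simp
    rw [hratio, Real.log_mul (by positivity) (Real.exp_pos c).ne',
      Real.log_mul hC.ne' (by positivity), Real.log_pow, Real.log_exp, Lf]
    simp
    ring

/-- The common value of `∑ₖ p(k) log(δ*(k)/q_c(k))` over all admissible `p`. -/
noncomputable def Tval (c y α : ℝ) : ℝ :=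
  (Real.log ((1 - y) / (Real.exp α - 1)) + c) + Real.log (α / c) * c
    + y * (Real.log y - Real.log ((1 - y) / (Real.exp α - 1)))

lemma sum_pL (c y α : ℝ) (p : ℕ → ℝ)
    (hp : Summable p) (hps : ∑' k, p k = 1) (hp0 : p 0 = y)
    (hm : Summable (fun k : ℕ => (k : ℝ) * p k)) (hms : ∑' k : ℕ, (k : ℝ) * p k = c) :
    Summable (fun k => p k * Lf c y α k) ∧
      ∑' k, p k * Lf c y α k = Tval c y α := by
  set C := Real.log ((1 - y) / (Real.exp α - 1)) + c with hCdef
  set D := Real.log y - Real.log ((1 - y) / (Real.exp α - 1)) with hDdef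
  have hpt : ∀ k : ℕ, p k * Lf c y α k
      = C * p k + Real.log (α / c) * ((k : ℝ) * p k) + (if k = 0 then y * D else 0) := by
    intro k
    rcases Nat.eq_zero_or_pos k with rfl | hk
    · simp [Lf, hp0]; ring
    · have : k ≠ 0 := hk.ne'
      simp [Lf, this]; ring
  have hs3 : Summable (fun k : ℕ => (if k = 0 then y * D else 0)) := by
    apply summable_of_ne_finset_zero (s := {0})
    intro k hk; simp at hk; simp [hk]
  have hsum : Summable (fun k => p k * Lf c y α k) := by
    refine (summable_congr hpt).mpr ?_
    exact ((hp.mul_left C).add (hm.mul_left _)).add hs3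
  refine ⟨hsum, ?_⟩
  rw [tsum_congr hpt, Summable.tsum_add ((hp.mul_left C).add (hm.mul_left _)) hs3,
    Summable.tsum_add (hp.mul_left C) (hm.mul_left _), tsum_mul_left, tsum_mul_left,
    hps, hms, tsum_ite_eq, Tval]
  ring


lemma dsR_zero (y α : ℝ) : dsR y α 0 = y := by simp [dsR]

lemma gstar_eval (c y α : ℝ) (hc : 0 < c) (hy : 0 < y) (hy1 : y < 1) (hα : 0 < α)
    (hsol : (1 - Real.exp (-α)) / α = (1 - y) / c) :
    (∑' k, ENNReal.ofReal ((deltaStar y α k).toReal *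
        Real.log ((deltaStar y α k).toReal / (poisMass c k).toReal)
        - (deltaStar y α k).toReal + (poisMass c k).toReal))
      = ENNReal.ofReal (Tval c y α) := by
  have hdt : ∀ k, (deltaStar y α k).toReal = dsR y α k := fun k => by
    rw [deltaStar_eq, ENNReal.toReal_ofReal (dsR_pos y α hy hy1 hα k).le]
  have hqt : ∀ k, (poisMass c k).toReal = qR c k := fun k => by
    rw [poisMass_eq, ENNReal.toReal_ofReal (qR_pos c hc k).le]
  have hLstar := sum_pL c y α (dsR y α) (summable_dsR y α hα) (tsum_dsR y α hα)
    (dsR_zero y α) (summable_mean_dsR y α hα) (tsum_mean_dsR c y α hc hα hsol)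
  have hpt : ∀ k, (deltaStar y α k).toReal *
        Real.log ((deltaStar y α k).toReal / (poisMass c k).toReal)
        - (deltaStar y α k).toReal + (poisMass c k).toReal
      = dsR y α k * Lf c y α k - dsR y α k + qR c k := by
    intro k
    rw [hdt, hqt, Lf_eq c y α hc hy hy1 hα]
  have hsumm : Summable (fun k => dsR y α k * Lf c y α k - dsR y α k + qR c k) :=
    (hLstar.1.sub (summable_dsR y α hα)).add (summable_qR c)
  have hnn : ∀ k, 0 ≤ dsR y α k * Lf c y α k - dsR y α k + qR c k := by
    intro k
    rw [← Lf_eq c y α hc hy hy1 hα]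
    exact key_ineq _ _ (dsR_pos y α hy hy1 hα k).le (qR_pos c hc k)
  simp only [hpt]
  rw [← ENNReal.ofReal_tsum_of_nonneg hnn hsumm]
  congr 1
  rw [Summable.tsum_add (hLstar.1.sub (summable_dsR y α hα)) (summable_qR c),
    Summable.tsum_sub hLstar.1 (summable_dsR y α hα), hLstar.2, tsum_dsR y α hα, tsum_qR c]
  ring

lemma main_ineq (c y α : ℝ) (hc : 0 < c) (hy : 0 < y) (hy1 : y < 1) (hα : 0 < α)
    (hsol : (1 - Real.exp (-α)) / α = (1 - y) / c)
    (δ : ℕ → ℝ≥0∞) (hδ1 : (∑' k, δ k) = 1) (hδ0 : δ 0 = ENNReal.ofReal y)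
    (hδm : (∑' k : ℕ, (k : ℝ≥0∞) * δ k) = ENNReal.ofReal c) :
    relEntN (deltaStar y α) (poisMass c) ≤ relEntN δ (poisMass c) := by
  have hac1 : ∀ k, poisMass c k = 0 → deltaStar y α k = 0 :=
    fun k h => absurd h (poisMass_ne_zero c hc k)
  have hac2 : ∀ k, poisMass c k = 0 → δ k = 0 :=
    fun k h => absurd h (poisMass_ne_zero c hc k)
  simp only [relEntN]
  rw [if_pos hac1, if_pos hac2, gstar_eval c y α hc hy hy1 hα hsol]
  -- set up the real mass function of δ
  set p : ℕ → ℝ := fun k => (δ k).toReal with hpdef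
  have hδtop : ∀ k, δ k ≠ ⊤ := by
    intro k
    have h1 : δ k ≤ 1 := hδ1 ▸ ENNReal.le_tsum k
    exact (lt_of_le_of_lt h1 ENNReal.one_lt_top).ne
  have hpnn : ∀ k, 0 ≤ p k := fun k => ENNReal.toReal_nonneg
  have hp : Summable p := ENNReal.summable_toReal (by rw [hδ1]; exact ENNReal.one_ne_top)
  have hps : ∑' k, p k = 1 := by
    have h := ENNReal.tsum_toReal_eq hδtop
    rw [hδ1] at h
    simpa using h.symm
  have hp0 : p 0 = y := by rw [hpdef]; simp only [hδ0, ENNReal.toReal_ofReal hy.le]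
  have hmt : ∀ k : ℕ, (k : ℝ≥0∞) * δ k ≠ ⊤ :=
    fun k => ENNReal.mul_ne_top (ENNReal.natCast_ne_top k) (hδtop k)
  have hmeq : ∀ k : ℕ, ((k : ℝ≥0∞) * δ k).toReal = (k : ℝ) * p k := by
    intro k; rw [ENNReal.toReal_mul]; simp [hpdef]
  have hm : Summable (fun k : ℕ => (k : ℝ) * p k) := by
    refine (ENNReal.summable_toReal (f := fun k : ℕ => (k : ℝ≥0∞) * δ k) ?_).congr hmeq
    rw [hδm]; exact ENNReal.ofReal_ne_top
  have hms : ∑' k : ℕ, (k : ℝ) * p k = c := by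
    have h := ENNReal.tsum_toReal_eq hmt
    rw [hδm, ENNReal.toReal_ofReal hc.le] at h
    rw [← tsum_congr hmeq, ← h]
  have hqt : ∀ k, (poisMass c k).toReal = qR c k := by
    intro k
    rw [poisMass_eq, ENNReal.toReal_ofReal (qR_pos c hc k).le]
  set g : ℕ → ℝ := fun k => p k * Real.log (p k / qR c k) - p k + qR c k with hgdef
  have hgoal_rhs : (∑' k, ENNReal.ofReal ((δ k).toReal *
        Real.log ((δ k).toReal / (poisMass c k).toReal) - (δ k).toReal + (poisMass c k).toReal))
      = ∑' k, ENNReal.ofReal (g k) := by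
    refine tsum_congr fun k => ?_
    rw [hqt]
  rw [hgoal_rhs]
  have hg_nn : ∀ k, 0 ≤ g k := fun k => key_ineq _ _ (hpnn k) (qR_pos c hc k)
  rcases eq_or_ne (∑' k, ENNReal.ofReal (g k)) ⊤ with htop | htop
  · rw [htop]; exact le_top
  -- g is summable
  have hgnn' : Summable (fun k => (g k).toNNReal) := by
    apply ENNReal.tsum_coe_ne_top_iff_summable.mp
    simpa [ENNReal.ofReal] using htop
  have hgsum : Summable g :=
    (NNReal.summable_coe.mpr hgnn').congr fun k => Real.coe_toNNReal _ (hg_nn k)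
  rw [← ENNReal.ofReal_tsum_of_nonneg hg_nn hgsum]
  apply ENNReal.ofReal_le_ofReal
  -- decompose g = h1 + h2
  have hLp := sum_pL c y α p hp hps hp0 hm hms
  set h2 : ℕ → ℝ := fun k => p k * Lf c y α k - dsR y α k + qR c k with hh2def
  set h1 : ℕ → ℝ := fun k => p k * Real.log (p k / dsR y α k) - p k + dsR y α k with hh1def
  have hdecomp : ∀ k, g k = h1 k + h2 k := by
    intro k
    rcases eq_or_lt_of_le (hpnn k) with h0 | hpos
    · simp only [hgdef, hh1def, hh2def, ← h0]
      simp
    · have hd := dsR_pos y α hy hy1 hα k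
      have hq := qR_pos c hc k
      have hlog : Real.log (p k / qR c k)
          = Real.log (p k / dsR y α k) + Lf c y α k := by
        rw [← Lf_eq c y α hc hy hy1 hα, ← Real.log_mul (div_pos hpos hd).ne' (div_pos hd hq).ne']
        congr 1
        field_simp
      simp only [hgdef, hh1def, hh2def, hlog]
      ring
  have hh2sum : Summable h2 :=
    (hLp.1.sub (summable_dsR y α hα)).add (summable_qR c)
  have hh2val : ∑' k, h2 k = Tval c y α := by
    rw [hh2def, Summable.tsum_add (hLp.1.sub (summable_dsR y α hα)) (summable_qR c),
      Summable.tsum_sub hLp.1 (summable_dsR y α hα), hLp.2, tsum_dsR y α hα, tsum_qR c]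
    ring
  have hh1sum : Summable h1 :=
    ((summable_congr hdecomp).mp hgsum).sub hh2sum |>.congr (fun k => by ring)
  have hh1nn : ∀ k, 0 ≤ h1 k :=
    fun k => key_ineq _ _ (hpnn k) (dsR_pos y α hy hy1 hα k)
  have hh1val : 0 ≤ ∑' k, h1 k := tsum_nonneg hh1nn
  have : ∑' k, g k = (∑' k, h1 k) + Tval c y α := by
    rw [tsum_congr hdecomp, Summable.tsum_add hh1sum hh2sum, hh2val]
  linarith

/-- for `c > 0`, `y ∈ (max(0,1−c), 1)` and `α > 0` the unique solution of
`(1 − e^{−α})/α = (1−y)/c`, the measure `δ*` is a probability measure on `ℕ` with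
`δ*(0) = y` and mean `c`, and it minimizes `H(· ∥ q_c)` among all probability measures
on `ℕ` with these two constraints. -/
theorem deltaStar_isMinimizer (c y α : ℝ) (hc : 0 < c) (hy0 : max 0 (1 - c) < y)
    (hy1 : y < 1) (hα : 0 < α) (hsol : (1 - Real.exp (-α)) / α = (1 - y) / c) :
    (∑' k, deltaStar y α k) = 1 ∧
    deltaStar y α 0 = ENNReal.ofReal y ∧
    (∑' k : ℕ, (k : ℝ≥0∞) * deltaStar y α k) = ENNReal.ofReal c ∧
    (∀ δ : ℕ → ℝ≥0∞, (∑' k, δ k) = 1 → δ 0 = ENNReal.ofReal y →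
      (∑' k : ℕ, (k : ℝ≥0∞) * δ k) = ENNReal.ofReal c →
      relEntN (deltaStar y α) (poisMass c) ≤ relEntN δ (poisMass c)) := by
  refine ⟨?_, ?_, ?_, ?_⟩
  · exact part1 y α (lt_of_le_of_lt (le_max_left 0 (1-c)) hy0) hy1 hα
  · simp [deltaStar]
  · exact part3 c y α hc (lt_of_le_of_lt (le_max_left 0 (1-c)) hy0) hy1 hα hsol
  · intro δ h1 h2 h3
    exact main_ineq c y α hc (lt_of_le_of_lt (le_max_left 0 (1-c)) hy0) hy1 hα hsol δ h1 h2 h3
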